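/- Let A ⊆ ℝ² be a symmetric set with 0, a, b ∈ A. Then for all integers m, n which are not both odd, the point m·a + n·b belongs to A. -/

import Mathlib

/-- The Euclidean point reflection `S_x(y) = 2x − y` in `ℝ²`. -/
def S (a b : ℝ × ℝ) : ℝ × ℝ := 2 • a - b

/-- A set `A ⊆ ℝ²` is symmetric if `S_x(y) = 2x − y ∈ A` for all `x, y ∈ A`. -/
def SymSetR2 (A : Set (ℝ × ℝ)) : Prop := ∀ x ∈ A, ∀ y ∈ A, S x y ∈ A

lemma sym_neg {A : Set (ℝ × ℝ)} (hA : SymSetR2 A) (h0 : (0 : ℝ × ℝ) ∈ A)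
    {z : ℝ × ℝ} (hz : z ∈ A) : -z ∈ A := by
  have := hA 0 h0 z hz
  simpa [S] using this

lemma sym_add2 {A : Set (ℝ × ℝ)} (hA : SymSetR2 A) (h0 : (0 : ℝ × ℝ) ∈ A)
    {c z : ℝ × ℝ} (hc : c ∈ A) (hz : z ∈ A) : z + (2:ℤ) • c ∈ A := by
  have h1 := hA c hc (-z) (sym_neg hA h0 hz)
  have : z + (2:ℤ) • c = S c (-z) := by simp only [S, two_smul]; abel
  rw [this]; exact h1

lemma sym_sub2 {A : Set (ℝ × ℝ)} (hA : SymSetR2 A) (h0 : (0 : ℝ × ℝ) ∈ A)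
    {c z : ℝ × ℝ} (hc : c ∈ A) (hz : z ∈ A) : z - (2:ℤ) • c ∈ A := by
  have h1 := sym_neg hA h0 (hA c hc z hz)
  have : z - (2:ℤ) • c = -(S c z) := by simp only [S, two_smul]; abel
  rw [this]; exact h1

lemma sym_trans {A : Set (ℝ × ℝ)} (hA : SymSetR2 A) (h0 : (0 : ℝ × ℝ) ∈ A)
    {c : ℝ × ℝ} (hc : c ∈ A) {y : ℝ × ℝ} (hy : y ∈ A) (m : ℤ) :
    y + (2 * m) • c ∈ A := by
  induction m using Int.induction_on with
  | zero => simpa using hy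
  | succ k ih =>
      have h1 := sym_add2 hA h0 hc ih
      have : y + (2 * ((k:ℤ) + 1)) • c = y + (2 * (k:ℤ)) • c + (2:ℤ) • c := by
        rw [mul_add, mul_one, add_smul, add_assoc]
      rw [this]; exact h1
  | pred k ih =>
      have h1 := sym_sub2 hA h0 hc ih
      have : y + (2 * (-(k:ℤ) - 1)) • c = y + (2 * (-(k:ℤ))) • c - (2:ℤ) • c := by
        rw [mul_sub, mul_one, sub_smul, add_sub_assoc]
      rw [this]; exact h1

theorem symmetric_lattice_points (A : Set (ℝ × ℝ)) (hA : SymSetR2 A) (a b : ℝ × ℝ)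
    (h0 : (0 : ℝ × ℝ) ∈ A) (ha : a ∈ A) (hb : b ∈ A) :
    ∀ m n : ℤ, ¬(Odd m ∧ Odd n) → m • a + n • b ∈ A := by
  have key : ∀ y ∈ A, ∀ k l : ℤ, y + (2 * k) • a + (2 * l) • b ∈ A := by
    intro y hy k l
    exact sym_trans hA h0 hb (sym_trans hA h0 ha hy k) l
  intro m n hmn
  rcases Int.even_or_odd m with hm | hm
  · obtain ⟨k, hk⟩ := hm
    rcases Int.even_or_odd n with hn | hn
    · obtain ⟨l, hl⟩ := hn
      have := key 0 h0 k l
      have hmk : m = 2 * k := by omega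
      have hnl : n = 2 * l := by omega
      rw [hmk, hnl]
      simpa using this
    · obtain ⟨l, hl⟩ := hn
      have := key b hb k l
      have hmk : m = 2 * k := by omega
      rw [hmk, hl]
      have : b + (2 * k) • a + (2 * l) • b = (2 * k) • a + (2 * l + 1) • b := by
        rw [add_smul, one_smul]; abel
      rw [← this]
      exact key b hb k l
  · rcases Int.even_or_odd n with hn | hn
    · obtain ⟨k, hk⟩ := hm
      obtain ⟨l, hl⟩ := hn
      have hnl : n = 2 * l := by omega
      rw [hk, hnl]
      have : (2 * k + 1) • a + (2 * l) • b = a + (2 * k) • a + (2 * l) • b := by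
        rw [add_smul, one_smul]; abel
      rw [this]
      exact key a ha k l
    · exact absurd ⟨hm, hn⟩ hmn
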